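/- For a service process S(s,t) = Σ_{k=s}^{t-1} c_k with non-negative real values c_k, feedback delay d = 1, and window w > 0, the single convolution step satisfies (S ⊗ δ_1 ⊗ δ^{+w} ⊗ S)(s,t) = S(s,t) − max_{s ≤ k < t} c_k + w for all s < t, where δ_1(s,t) = δ(s, t−1) is the unit-delay element and δ^{+w}(s,t) = w for s ≥ t, ∞ otherwise. -/

import Mathlib

open scoped ENNReal NNReal

/-- Min-plus convolution of bivariate functions. -/
noncomputable def conv (f g : ℕ → ℕ → ℝ≥0∞) : ℕ → ℕ → ℝ≥0∞ :=
  fun s t => ⨅ τ ∈ Finset.Icc s t, f s τ + g τ t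

/-- The neutral element δ : δ(s,t)=0 if s ≥ t, ∞ otherwise. -/
noncomputable def delta : ℕ → ℕ → ℝ≥0∞ := fun s t => if t ≤ s then 0 else ∞

/-- n-fold self-convolution: f^(0) = δ, f^(n+1) = f^(n) ⊗ f. -/
noncomputable def convPow (f : ℕ → ℕ → ℝ≥0∞) : ℕ → ℕ → ℕ → ℝ≥0∞
  | 0 => delta
  | n + 1 => conv (convPow f n) f

/-- Subadditive subClosure f* = inf over n of f^(n). -/
noncomputable def subClosure (f : ℕ → ℕ → ℝ≥0∞) : ℕ → ℕ → ℝ≥0∞ :=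
  fun s t => ⨅ n : ℕ, convPow f n s t

/-- Delay element: δ_d(s,t) = 0 if s ≥ t − d, ∞ otherwise. -/
noncomputable def deltaD (d : ℕ) : ℕ → ℕ → ℝ≥0∞ := fun s t => if t ≤ s + d then 0 else ∞

/-- Window element: δ^{+w}(s,t) = w if s ≥ t, ∞ otherwise. -/
noncomputable def deltaW (w : ℝ≥0∞) : ℕ → ℕ → ℝ≥0∞ := fun s t => if t ≤ s then w else ∞

/-- single convolution step for additive service, d = 1:
(S ⊗ δ_1 ⊗ δ^{+w} ⊗ S)(s,t) = S(s,t) − max_{s ≤ k < t} c_k + w for s < t. -/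
theorem single_step_unit_delay (c : ℕ → ℝ≥0) (w : ℝ≥0∞) (hw : 0 < w) (hw' : w ≠ ∞)
    (S : ℕ → ℕ → ℝ≥0∞) (hS : ∀ s t, S s t = ∑ k ∈ Finset.Ico s t, (c k : ℝ≥0∞)) :
    ∀ s t : ℕ, s < t →
      conv (conv (conv S (deltaD 1)) (deltaW w)) S s t
        = S s t - ((Finset.Ico s t).sup fun k => (c k : ℝ≥0∞)) + w := by
  intro s t hst
  set M : ℝ≥0∞ := (Finset.Ico s t).sup fun k => (c k : ℝ≥0∞) with hM
  obtain ⟨k0, hk0mem, hk0⟩ := Finset.exists_mem_eq_sup (Finset.Ico s t)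
    ⟨s, Finset.mem_Ico.mpr ⟨le_rfl, hst⟩⟩ (fun k => (c k : ℝ≥0∞))
  obtain ⟨hsk0, hk0t⟩ := Finset.mem_Ico.mp hk0mem
  -- splitting of S
  have hsplit : S s t = (S s k0 + S (k0+1) t) + (c k0 : ℝ≥0∞) := by
    rw [hS, hS, hS, ← Finset.sum_Ico_consecutive _ hsk0 (le_of_lt hk0t),
      Finset.sum_eq_sum_Ico_succ_bot hk0t]
    ring
  have hsub : S s t - M = S s k0 + S (k0+1) t := by
    rw [hsplit, hM, hk0]
    exact ENNReal.add_sub_cancel_right ENNReal.coe_ne_top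
  apply le_antisymm
  · -- choose u = k0+1, τ2 = k0+1, τ1 = k0
    have h1 : conv (conv (conv S (deltaD 1)) (deltaW w)) S s t
        ≤ conv (conv S (deltaD 1)) (deltaW w) s (k0+1) + S (k0+1) t := by
      refine iInf₂_le (k0+1) ?_
      exact Finset.mem_Icc.mpr ⟨Nat.le_succ_of_le hsk0, hk0t⟩
    have h2 : conv (conv S (deltaD 1)) (deltaW w) s (k0+1)
        ≤ conv S (deltaD 1) s (k0+1) + deltaW w (k0+1) (k0+1) := by
      refine iInf₂_le (k0+1) ?_
      exact Finset.mem_Icc.mpr ⟨Nat.le_succ_of_le hsk0, le_rfl⟩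
    have h3 : conv S (deltaD 1) s (k0+1) ≤ S s k0 + deltaD 1 k0 (k0+1) := by
      refine iInf₂_le k0 ?_
      exact Finset.mem_Icc.mpr ⟨hsk0, Nat.le_succ _⟩
    have hD : deltaD 1 k0 (k0+1) = 0 := by simp [deltaD]
    have hW : deltaW w (k0+1) (k0+1) = w := by simp [deltaW]
    rw [hsub]
    calc conv (conv (conv S (deltaD 1)) (deltaW w)) S s t
        ≤ (S s k0 + deltaD 1 k0 (k0+1) + deltaW w (k0+1) (k0+1)) + S (k0+1) t := by
          refine le_trans h1 (add_le_add (le_trans h2 (add_le_add h3 le_rfl)) le_rfl)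
      _ = S s k0 + S (k0+1) t + w := by rw [hD, hW]; ring
  · -- lower bound
    simp only [conv, ENNReal.iInf_add, ENNReal.add_iInf]
    refine le_iInf₂ fun u hu => le_iInf₂ fun τ2 hτ2 => le_iInf₂ fun τ1 hτ1 => ?_
    obtain ⟨hsτ1, hτ1τ2⟩ := Finset.mem_Icc.mp hτ1
    obtain ⟨_, hτ2u⟩ := Finset.mem_Icc.mp hτ2
    obtain ⟨_, hut⟩ := Finset.mem_Icc.mp hu
    by_cases hD : τ2 ≤ τ1 + 1
    · by_cases hW : u ≤ τ2
      · have hDv : deltaD 1 τ1 τ2 = 0 := by simp [deltaD, hD]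
        have hWv : deltaW w τ2 u = w := by simp [deltaW, hW]
        rw [hDv, hWv]
        have huτ1 : u ≤ τ1 + 1 := le_trans hW hD
        -- S u t ≥ S (τ1+1) t
        have hmono : S (τ1+1) t ≤ S u t := by
          rw [hS, hS]
          exact Finset.sum_le_sum_of_subset (Finset.Ico_subset_Ico huτ1 le_rfl)
        have key : S s t - M ≤ S s τ1 + S u t := by
          rcases lt_or_ge τ1 t with hτ1t | htτ1
          · have hcle : (c τ1 : ℝ≥0∞) ≤ M := by
              rw [hM]
              exact Finset.le_sup (f := fun k => (c k : ℝ≥0∞)) (Finset.mem_Ico.mpr ⟨hsτ1, hτ1t⟩)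
            have hsplit2 : S s t = S s τ1 + (c τ1 : ℝ≥0∞) + S (τ1+1) t := by
              rw [hS, hS, hS, ← Finset.sum_Ico_consecutive _ hsτ1 (le_of_lt hτ1t),
                Finset.sum_eq_sum_Ico_succ_bot hτ1t]
              ring
            rw [tsub_le_iff_right]
            calc S s t = S s τ1 + (c τ1 : ℝ≥0∞) + S (τ1+1) t := hsplit2
              _ ≤ S s τ1 + M + S u t := by
                  exact add_le_add (add_le_add_right hcle _) hmono
              _ = S s τ1 + S u t + M := by ring
          · have : S s t ≤ S s τ1 := by
              rw [hS, hS]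
              exact Finset.sum_le_sum_of_subset (Finset.Ico_subset_Ico le_rfl htτ1)
            exact le_trans (tsub_le_self) (le_trans this (le_add_right le_rfl))
        calc S s t - M + w ≤ (S s τ1 + S u t) + w := add_le_add key le_rfl
          _ = S s τ1 + 0 + w + S u t := by ring
      · have : deltaW w τ2 u = ∞ := by simp [deltaW, hW]
        simp [this]
    · have : deltaD 1 τ1 τ2 = ∞ := by simp [deltaD, hD]
      simp [this]
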